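/- Let d ≥ 1, let Ω ⊆ ℝ^d be a nonempty bounded open set, let ε > 0 and k > 0, and set k′ = ε²k/(k + ε²). Then for all u, w, v ∈ V, (1/k)∫_Ω (u − w)v dx + ∫_Ω ⟨∇u, ∇v⟩ dx + (1/ε²)∫_Ω (u³ − w)v dx = (1/k′)∫_Ω (u − w)v dx + ∫_Ω ⟨∇u, ∇v⟩ dx + (1/ε²)∫_Ω (u³ − u)v dx. Consequently, u satisfies the convex splitting scheme with previous iterate w, time step k, and test functions from any subset of V if and only if u satisfies the fully implicit scheme with previous iterate w and time step k′ for the same test functions. -/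
import Mathlib


open MeasureTheory Set RealInnerProductSpace

/-- The convex splitting scheme for the Allen–Cahn equation is exactly the fully
implicit scheme with the smaller time step `k' = ε²k/(k+ε²)` (Theorem 2.4). -/
theorem stmt_4 (d : ℕ) (hd : 1 ≤ d)
    (Ω : Set (EuclideanSpace ℝ (Fin d))) (hΩne : Ω.Nonempty)
    (hΩbd : Bornology.IsBounded Ω) (hΩop : IsOpen Ω)
    (ε k k' : ℝ) (hε : 0 < ε) (hk0 : 0 < k)
    (hk' : k' = ε ^ 2 * k / (k + ε ^ 2))
    (u w : EuclideanSpace ℝ (Fin d) → ℝ)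
    (hu : ContDiff ℝ 1 u) (hw : ContDiff ℝ 1 w) :
    (∀ v : EuclideanSpace ℝ (Fin d) → ℝ, ContDiff ℝ 1 v →
      1 / k * (∫ x in Ω, (u x - w x) * v x)
        + (∫ x in Ω, ⟪gradient u x, gradient v x⟫)
        + 1 / ε ^ 2 * (∫ x in Ω, ((u x) ^ 3 - w x) * v x)
      = 1 / k' * (∫ x in Ω, (u x - w x) * v x)
        + (∫ x in Ω, ⟪gradient u x, gradient v x⟫)
        + 1 / ε ^ 2 * (∫ x in Ω, ((u x) ^ 3 - u x) * v x)) ∧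
    (∀ T : Set (EuclideanSpace ℝ (Fin d) → ℝ), (∀ v ∈ T, ContDiff ℝ 1 v) →
      ((∀ v ∈ T,
        1 / k * (∫ x in Ω, (u x - w x) * v x)
          + (∫ x in Ω, ⟪gradient u x, gradient v x⟫)
          + 1 / ε ^ 2 * (∫ x in Ω, ((u x) ^ 3 - w x) * v x) = 0) ↔
       (∀ v ∈ T,
        1 / k' * (∫ x in Ω, (u x - w x) * v x)
          + (∫ x in Ω, ⟪gradient u x, gradient v x⟫)
          + 1 / ε ^ 2 * (∫ x in Ω, ((u x) ^ 3 - u x) * v x) = 0))) := by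
  have hke : 0 < k + ε ^ 2 := by positivity
  have hk'pos : 0 < k' := by rw [hk']; positivity
  have key : ∀ v : EuclideanSpace ℝ (Fin d) → ℝ, ContDiff ℝ 1 v →
      1 / k * (∫ x in Ω, (u x - w x) * v x)
        + (∫ x in Ω, ⟪gradient u x, gradient v x⟫)
        + 1 / ε ^ 2 * (∫ x in Ω, ((u x) ^ 3 - w x) * v x)
      = 1 / k' * (∫ x in Ω, (u x - w x) * v x)
        + (∫ x in Ω, ⟪gradient u x, gradient v x⟫)
        + 1 / ε ^ 2 * (∫ x in Ω, ((u x) ^ 3 - u x) * v x) := by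
    intro v hv
    have hint : ∀ f : EuclideanSpace ℝ (Fin d) → ℝ, Continuous f →
        IntegrableOn f Ω (volume) := by
      intro f hf
      have hc : IsCompact (closure Ω) := Metric.isCompact_of_isClosed_isBounded isClosed_closure hΩbd.closure
      exact (hf.continuousOn.integrableOn_compact hc).mono_set subset_closure
    have h1 : IntegrableOn (fun x => ((u x) ^ 3 - u x) * v x) Ω volume := by
      apply hint
      exact ((hu.continuous.pow 3).sub hu.continuous).mul hv.continuous
    have h2 : IntegrableOn (fun x => (u x - w x) * v x) Ω volume := by
      apply hint
      exact (hu.continuous.sub hw.continuous).mul hv.continuous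
    have hsplit : (∫ x in Ω, ((u x) ^ 3 - w x) * v x)
        = (∫ x in Ω, ((u x) ^ 3 - u x) * v x) + (∫ x in Ω, (u x - w x) * v x) := by
      rw [← integral_add h1 h2]
      apply integral_congr_ae
      filter_upwards with x
      ring
    have hkinv : 1 / k' = 1 / k + 1 / ε ^ 2 := by
      rw [hk']
      field_simp
      ring
    rw [hsplit, hkinv]
    ring
  refine ⟨key, fun T hT => ?_⟩
  constructor <;> intro h v hvT <;> have hv := hT v hvT
  · rw [← key v hv]; exact h v hvT
  · rw [key v hv]; exact h v hvT
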